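/- Let θ := π/8 and set [m] := sin(mθ)/sin θ for m ∈ ℤ. Let M be the complex 4×4 matrix M := (1/[4]) · [[ [3], −1, −√[3], −√[3] ], [ −1, [3], i√[3], −i√[3] ], [ −√[3], −i√[3], [3], i ], [ −√[3], i√[3], −i, [3] ]], where i is the imaginary unit and √[3] is the real square root of [3]. Then M is Hermitian and M·M = [2]·M. -/

import Mathlib

/-- Trigonometric quantum integer `[m] = sin(m·π/8)/sin(π/8)`,
i.e. `[m]_q` at `q = e^{2πi/16}`. -/
noncomputable def qi8 (m : ℤ) : ℝ :=
  Real.sin (m * (Real.pi / 8)) / Real.sin (Real.pi / 8)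


lemma hs_pos : 0 < Real.sin (Real.pi / 8) := by
  apply Real.sin_pos_of_pos_of_lt_pi <;> [positivity; nlinarith [Real.pi_pos]]

lemma sqrt2_lt : Real.sqrt 2 < 2 := by
  nlinarith [Real.sq_sqrt (by norm_num : (2:ℝ) ≥ 0), Real.sqrt_nonneg 2]

lemma hmp : Real.sqrt (2 - Real.sqrt 2) * Real.sqrt (2 + Real.sqrt 2) = Real.sqrt 2 := by
  rw [← Real.sqrt_mul (by nlinarith [sqrt2_lt])]
  congr 1
  nlinarith [Real.sq_sqrt (by norm_num : (2:ℝ) ≥ 0)]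

lemma qi8_two : qi8 2 = Real.sqrt 2 / (2 * Real.sin (Real.pi / 8)) := by
  unfold qi8
  rw [show ((2:ℤ):ℝ) * (Real.pi / 8) = Real.pi / 4 by push_cast; ring, Real.sin_pi_div_four]
  ring

lemma qi8_three : qi8 3 = Real.cos (Real.pi / 8) / Real.sin (Real.pi / 8) := by
  unfold qi8
  rw [show ((3:ℤ):ℝ) * (Real.pi / 8) = Real.pi / 2 - Real.pi / 8 by push_cast; ring,
    Real.sin_pi_div_two_sub]

lemma qi8_four : qi8 4 = 1 / Real.sin (Real.pi / 8) := by
  unfold qi8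
  rw [show ((4:ℤ):ℝ) * (Real.pi / 8) = Real.pi / 2 by push_cast; ring, Real.sin_pi_div_two]

lemma qi8_three_nonneg : 0 ≤ qi8 3 := by
  rw [qi8_three]
  have h1 := hs_pos
  have : 0 < Real.cos (Real.pi / 8) := by
    apply Real.cos_pos_of_mem_Ioo; constructor <;> nlinarith [Real.pi_pos]
  positivity

lemma hac : qi8 2 * qi8 4 = 2 * qi8 3 := by
  rw [qi8_two, qi8_three, qi8_four, Real.sin_pi_div_eight, Real.cos_pi_div_eight]
  have h1 : Real.sqrt (2 - Real.sqrt 2) > 0 := by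
    apply Real.sqrt_pos.2; nlinarith [sqrt2_lt]
  field_simp
  nlinarith [hmp, Real.sq_sqrt (by nlinarith [sqrt2_lt] : (2 - Real.sqrt 2 : ℝ) ≥ 0), h1]

lemma habc : qi8 2 * qi8 3 * qi8 4 = (qi8 3 + 1)^2 := by
  rw [qi8_two, qi8_three, qi8_four, Real.sin_pi_div_eight, Real.cos_pi_div_eight]
  have h1 : Real.sqrt (2 - Real.sqrt 2) > 0 := by
    apply Real.sqrt_pos.2; nlinarith [sqrt2_lt]
  have hm := Real.sq_sqrt (by nlinarith [sqrt2_lt] : (2 - Real.sqrt 2 : ℝ) ≥ 0)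
  have hp := Real.sq_sqrt (by positivity : (2 + Real.sqrt 2 : ℝ) ≥ 0)
  have h2 := Real.sq_sqrt (by norm_num : (2:ℝ) ≥ 0)
  have h3 : (0:ℝ) ≤ 3 * Real.sqrt 2 - 4 := by
    nlinarith [h2, Real.sqrt_nonneg 2]
  have h4 : (0:ℝ) ≤ 2 - Real.sqrt 2 := by nlinarith [sqrt2_lt]
  have heq : (2 - Real.sqrt 2) * Real.sqrt (2 - Real.sqrt 2)
      = (3 * Real.sqrt 2 - 4) * Real.sqrt (2 + Real.sqrt 2) := by
    have e1 : (2 - Real.sqrt 2) * Real.sqrt (2 - Real.sqrt 2)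
        = Real.sqrt ((2 - Real.sqrt 2)^2 * (2 - Real.sqrt 2)) := by
      rw [Real.sqrt_mul (by positivity), Real.sqrt_sq h4]
    have e2 : (3 * Real.sqrt 2 - 4) * Real.sqrt (2 + Real.sqrt 2)
        = Real.sqrt ((3 * Real.sqrt 2 - 4)^2 * (2 + Real.sqrt 2)) := by
      rw [Real.sqrt_mul (by positivity), Real.sqrt_sq h3]
    rw [e1, e2]
    congr 1
    nlinarith [h2, Real.sqrt_nonneg 2]
  have hx := h1.ne'
  have h4' : (2:ℝ) - Real.sqrt 2 ≠ 0 := by nlinarith [sqrt2_lt]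
  field_simp
  linear_combination (-(2 + Real.sqrt 2)^2) * heq
    + (-Real.sqrt (2 - Real.sqrt 2)) * hp
    + (-Real.sqrt (2 - Real.sqrt 2)) * hm
    + (-2 * Real.sqrt (2 - Real.sqrt 2)) * hmp
    + (-((2 + Real.sqrt 2) * Real.sqrt (2 - Real.sqrt 2)
      + (3 * Real.sqrt 2 + 8) * Real.sqrt (2 + Real.sqrt 2))) * h2

lemma qi8_four_ne : qi8 4 ≠ 0 := by
  have := hs_pos
  rw [qi8_four]; positivity

/-- The 4×4 block U^4_{3} of the level-4 conformal-inclusion cell system. -/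
noncomputable def U43 : Matrix (Fin 4) (Fin 4) ℂ :=
  ((1 / qi8 4 : ℝ) : ℂ) •
    !![((qi8 3 : ℝ) : ℂ), -1, (-(Real.sqrt (qi8 3)) : ℝ),
         ((-(Real.sqrt (qi8 3)) : ℝ) : ℂ);
       -1, ((qi8 3 : ℝ) : ℂ), Complex.I * ((Real.sqrt (qi8 3) : ℝ) : ℂ),
         -Complex.I * ((Real.sqrt (qi8 3) : ℝ) : ℂ);
       ((-(Real.sqrt (qi8 3)) : ℝ) : ℂ), -Complex.I * ((Real.sqrt (qi8 3) : ℝ) : ℂ),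
         ((qi8 3 : ℝ) : ℂ), Complex.I;
       ((-(Real.sqrt (qi8 3)) : ℝ) : ℂ), Complex.I * ((Real.sqrt (qi8 3) : ℝ) : ℂ),
         -Complex.I, ((qi8 3 : ℝ) : ℂ)]

set_option maxHeartbeats 1000000 in
/-- The 4×4 block U^4_3 is Hermitian and satisfies the Hecke relation. -/
theorem level4_fourByFour_hecke_block :
    U43.IsHermitian ∧ U43 * U43 = ((qi8 2 : ℝ) : ℂ) • U43 := by
  have hb2 : ((qi8 3 : ℝ) : ℂ)^2 = 2 * ((qi8 3:ℝ):ℂ) + 1 := by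
    have h : (qi8 3)^2 = 2 * qi8 3 + 1 := by
      have h1 := hac; have h2 := habc; have h3 := qi8_four_ne
      have h4 : qi8 2 * qi8 4 * qi8 3 = 2 * qi8 3 * qi8 3 := by rw [h1]
      nlinarith [h2, h4]
    exact_mod_cast h
  have haC : ((qi8 2 : ℝ) : ℂ) * ((qi8 4:ℝ):ℂ) = 2 * ((qi8 3:ℝ):ℂ) := by
    exact_mod_cast hac
  have hrC : ((Real.sqrt (qi8 3) : ℝ) : ℂ)^2 = ((qi8 3:ℝ):ℂ) := by
    exact_mod_cast Real.sq_sqrt qi8_three_nonneg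
  have hcC : ((qi8 4:ℝ):ℂ) ≠ 0 := by exact_mod_cast qi8_four_ne
  set A0 : Matrix (Fin 4) (Fin 4) ℂ :=
    !![((qi8 3 : ℝ) : ℂ), -1, (-(Real.sqrt (qi8 3)) : ℝ),
         ((-(Real.sqrt (qi8 3)) : ℝ) : ℂ);
       -1, ((qi8 3 : ℝ) : ℂ), Complex.I * ((Real.sqrt (qi8 3) : ℝ) : ℂ),
         -Complex.I * ((Real.sqrt (qi8 3) : ℝ) : ℂ);
       ((-(Real.sqrt (qi8 3)) : ℝ) : ℂ), -Complex.I * ((Real.sqrt (qi8 3) : ℝ) : ℂ),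
         ((qi8 3 : ℝ) : ℂ), Complex.I;
       ((-(Real.sqrt (qi8 3)) : ℝ) : ℂ), Complex.I * ((Real.sqrt (qi8 3) : ℝ) : ℂ),
         -Complex.I, ((qi8 3 : ℝ) : ℂ)] with hA0
  have hU : U43 = ((1 / qi8 4 : ℝ) : ℂ) • A0 := rfl
  have key : A0 * A0 = (2 * ((qi8 3:ℝ):ℂ)) • A0 := by
    ext i j
    fin_cases i <;> fin_cases j <;>
      simp [hA0, Matrix.mul_apply, Fin.sum_univ_four, Matrix.smul_apply,
        Matrix.vecHead, Matrix.vecTail, Complex.ofReal_neg]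
    all_goals
      first
        | ring1
        | linear_combination 2*hrC - hb2
        | linear_combination (-2*((Real.sqrt (qi8 3):ℝ):ℂ)^2) * Complex.I_sq + 2*hrC - hb2
        | linear_combination (-(((Real.sqrt (qi8 3):ℝ):ℂ)^2 + 1)) * Complex.I_sq + 2*hrC - hb2
        | linear_combination ((Real.sqrt (qi8 3):ℝ):ℂ) * Complex.I_sq
        | linear_combination (-((Real.sqrt (qi8 3):ℝ):ℂ)) * Complex.I_sq
        | linear_combination ((Real.sqrt (qi8 3):ℝ):ℂ)^2 * Complex.I_sq
        | linear_combination (-(((Real.sqrt (qi8 3):ℝ):ℂ)^2)) * Complex.I_sq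
        | linear_combination (-(((Real.sqrt (qi8 3):ℝ):ℂ)^2)) * Complex.I_sq + 2*hrC - hb2
  constructor
  · rw [Matrix.IsHermitian]
    ext i j
    fin_cases i <;> fin_cases j <;>
      simp [hA0, U43, Matrix.conjTranspose_apply, Complex.conj_ofReal,
        Matrix.vecHead, Matrix.vecTail]
  · rw [hU, Matrix.smul_mul, Matrix.mul_smul, key, smul_smul, smul_smul, smul_smul]
    congr 1
    push_cast
    field_simp
    first
      | linear_combination (-1 : ℂ) * haC
      | linear_combination ((qi8 4:ℝ):ℂ) * haC
      | linear_combination (-((qi8 4:ℝ):ℂ)) * haC
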